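/- arXiv:2408.14094 — 3 statements merged into one kernel-verified Lean document; each statement's English description precedes it below -/
import Mathlib

section
/- For 0 ≤ k ≤ n, the q-binomial analog ⟨n, k⟩_q (the coefficient of x^{n-k} in f(x)^{k+1}) satisfies ⟨n, k⟩_q = q^{n-k} · ∑_{j=1}^{k+1} C(k+1, j) · ⟨n-k-1, j-1⟩_q whenever k < n, where ⟨m, j⟩_q is interpreted as the coefficient of x^{m-j} in f(x)^{j+1} (zero if m < j). -/
noncomputable def f : PowerSeries (Polynomial ℤ) :=
  PowerSeries.mk fun m => (Polynomial.X : Polynomial ℤ) ^ Nat.choose (m + 1) 2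

/-- `angleZ m j` is the coefficient of `x^(m-j)` in `f^(j+1)`, set to `0` when `j > m`. -/
noncomputable def angleZ (m j : ℕ) : Polynomial ℤ :=
  if j ≤ m then PowerSeries.coeff (m - j) (f ^ (j + 1)) else 0

open PowerSeries Polynomial

lemma f_funct_eq :
    f = 1 + (PowerSeries.C Polynomial.X * PowerSeries.X) *
      PowerSeries.rescale Polynomial.X f := by
  apply PowerSeries.ext
  intro n
  cases n with
  | zero =>
      simp [f, PowerSeries.coeff_zero_eq_constantCoeff, mul_assoc]
  | succ m =>
      rw [map_add, PowerSeries.coeff_one]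
      simp only [Nat.succ_ne_zero, if_false, zero_add, mul_assoc,
        PowerSeries.coeff_C_mul, PowerSeries.coeff_succ_X_mul, PowerSeries.coeff_rescale]
      simp only [f, PowerSeries.coeff_mk]
      rw [← pow_add, ← pow_succ']
      congr 1
      have h := Nat.choose_succ_succ (m + 1) 1
      simp [Nat.choose_one_right] at h
      omega

theorem angle_binomial_recursion (n k : ℕ) (hkn : k < n) :
    angleZ n k = (Polynomial.X : Polynomial ℤ) ^ (n - k) *
      ∑ j ∈ Finset.Icc 1 (k + 1),
        ((k + 1).choose j : Polynomial ℤ) * angleZ (n - k - 1) (j - 1) := by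
  set d := n - k with hd
  have hd1 : 1 ≤ d := by omega
  rw [angleZ, if_pos (le_of_lt hkn)]
  -- expand f^(k+1) via the functional equation
  have key : (PowerSeries.coeff d) (f ^ (k + 1)) =
      ∑ j ∈ Finset.range (k + 2),
        ((k + 1).choose j : Polynomial ℤ) *
          PowerSeries.coeff d
            (((PowerSeries.C Polynomial.X * PowerSeries.X) *
              PowerSeries.rescale Polynomial.X f) ^ j) := by
    conv_lhs => rw [f_funct_eq, add_comm, add_pow]
    rw [map_sum]
    refine Finset.sum_congr rfl fun j hj => ?_
    rw [one_pow, mul_one, ← map_natCast (PowerSeries.C (R := Polynomial ℤ)) ((k+1).choose j),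
      mul_comm, PowerSeries.coeff_C_mul]
  rw [key, Finset.sum_range_succ']
  have h0 : ((k + 1).choose 0 : Polynomial ℤ) *
      PowerSeries.coeff d
        (((PowerSeries.C Polynomial.X * PowerSeries.X) *
          PowerSeries.rescale Polynomial.X f) ^ 0) = 0 := by
    simp [PowerSeries.coeff_one]
    omega
  rw [h0, add_zero, ← Finset.Ico_add_one_right_eq_Icc, Finset.sum_Ico_eq_sum_range, Finset.mul_sum]
  refine Finset.sum_congr rfl fun i hi => ?_
  have hc : (1 : ℕ) + i = i + 1 := by omega
  rw [hc]
  -- compute coeff d of c^(i+1)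
  rw [mul_pow, mul_pow, ← map_pow, ← map_pow, mul_assoc,
    PowerSeries.coeff_C_mul, PowerSeries.coeff_X_pow_mul',
    Nat.add_sub_cancel, angleZ]
  by_cases h : i + 1 ≤ d
  · rw [if_pos h, if_pos (by omega : i ≤ n - k - 1), PowerSeries.coeff_rescale,
      show n - k - 1 - i = d - (i + 1) from by omega,
      ← mul_assoc (Polynomial.X ^ (i+1)), ← pow_add,
      show (i + 1) + (d - (i + 1)) = d from by omega]
    ring
  · rw [if_neg h, if_neg (by omega : ¬ i ≤ n - k - 1)]
    simp
end

section
/- For 0 ≤ k < n, the polynomial ⟨n, k⟩_q (the coefficient of x^{n-k} in f(x)^{k+1}) has degree C(n-k+1, 2) = (n-k)(n-k+1)/2 in q, and its leading coefficient equals k+1. -/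
noncomputable def angle (n k : ℕ) : Polynomial ℤ :=
  PowerSeries.coeff (R := Polynomial ℤ) (n - k) (f ^ (k + 1))

lemma T_succ (n : ℕ) : Nat.choose (n + 2) 2 = Nat.choose (n + 1) 2 + (n + 1) := by
  rw [Nat.choose_succ_succ (n + 1) 1, Nat.choose_one_right]; exact Nat.add_comm _ _

lemma T_add (a b : ℕ) :
    Nat.choose (a + b + 1) 2 = Nat.choose (a + 1) 2 + Nat.choose (b + 1) 2 + a * b := by
  induction b with
  | zero => simp
  | succ b ih =>
    have h1 : a + (b + 1) + 1 = (a + b) + 2 := by omega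
    rw [h1, T_succ (a + b), ih, T_succ b, Nat.mul_succ]
    omega

lemma coeff_f (m : ℕ) :
    PowerSeries.coeff (R := Polynomial ℤ) m f = Polynomial.X ^ Nat.choose (m + 1) 2 := by
  simp [f]

lemma coeff_zero_f_pow (m : ℕ) :
    PowerSeries.coeff (R := Polynomial ℤ) 0 (f ^ m) = 1 := by
  rw [PowerSeries.coeff_zero_eq_constantCoeff, map_pow]
  have : PowerSeries.constantCoeff (R := Polynomial ℤ) f = 1 := by
    rw [← PowerSeries.coeff_zero_eq_constantCoeff, coeff_f]
    simp
  rw [this, one_pow]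

lemma key (j : ℕ) : ∀ N : ℕ,
    (PowerSeries.coeff (R := Polynomial ℤ) N (f ^ (j + 1))).natDegree ≤ Nat.choose (N + 1) 2 ∧
    (1 ≤ N →
      (PowerSeries.coeff (R := Polynomial ℤ) N (f ^ (j + 1))).coeff (Nat.choose (N + 1) 2)
        = (j + 1 : ℤ)) := by
  induction j with
  | zero =>
    intro N
    rw [pow_one, coeff_f]
    constructor
    · exact le_of_eq (Polynomial.natDegree_X_pow _)
    · intro _; simp
  | succ j ih =>
    intro N
    rw [pow_succ, PowerSeries.coeff_mul]
    rw [Finset.Nat.sum_antidiagonal_eq_sum_range_succ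
      (fun a b => PowerSeries.coeff (R := Polynomial ℤ) a (f ^ (j + 1)) *
        PowerSeries.coeff (R := Polynomial ℤ) b f)]
    have hdeg : ∀ i ∈ Finset.range (N + 1),
        (PowerSeries.coeff (R := Polynomial ℤ) i (f ^ (j + 1)) *
          PowerSeries.coeff (R := Polynomial ℤ) (N - i) f).natDegree
          ≤ Nat.choose (i + 1) 2 + Nat.choose (N - i + 1) 2 := by
      intro i _
      refine le_trans (Polynomial.natDegree_mul_le) ?_
      gcongr
      · exact (ih i).1
      · rw [coeff_f]; exact le_of_eq (Polynomial.natDegree_X_pow _)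
    constructor
    · refine Polynomial.natDegree_sum_le_of_forall_le _ _ ?_
      intro i hi
      refine le_trans (hdeg i hi) ?_
      have hiN : i ≤ N := by simp at hi; omega
      have := T_add i (N - i)
      rw [show i + (N - i) = N from by omega] at this
      omega
    · intro hN
      rw [Polynomial.finset_sum_coeff]
      have hterm : ∀ i ∈ Finset.range (N + 1),
          (PowerSeries.coeff (R := Polynomial ℤ) i (f ^ (j + 1)) *
            PowerSeries.coeff (R := Polynomial ℤ) (N - i) f).coeff (Nat.choose (N + 1) 2)
          = (if i = 0 then 1 else 0) + (if i = N then (j + 1 : ℤ) else 0) := by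
        intro i hi
        have hiN : i ≤ N := by simp at hi; omega
        rcases Nat.eq_zero_or_pos i with h0 | h0
        · subst h0
          rw [coeff_zero_f_pow, coeff_f, one_mul, Nat.sub_zero, Polynomial.coeff_X_pow]
          have : ¬ (0 = N) := by omega
          simp [this]
        rcases Nat.lt_or_ge i N with hlt | hge
        · -- 0 < i < N : coefficient vanishes
          have hd : (PowerSeries.coeff (R := Polynomial ℤ) i (f ^ (j + 1)) *
              PowerSeries.coeff (R := Polynomial ℤ) (N - i) f).natDegree
              < Nat.choose (N + 1) 2 := by
            refine lt_of_le_of_lt (hdeg i hi) ?_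
            have := T_add i (N - i)
            rw [show i + (N - i) = N from by omega] at this
            have : 1 ≤ i * (N - i) := Nat.one_le_iff_ne_zero.mpr (by
              have : N - i ≠ 0 := by omega
              positivity)
            omega
          rw [Polynomial.coeff_eq_zero_of_natDegree_lt hd]
          have h1 : ¬ (i = 0) := by omega
          have h2 : ¬ (i = N) := by omega
          simp [h1, h2]
        · -- i = N
          have hiN' : i = N := by omega
          rw [hiN', Nat.sub_self, coeff_f, show Nat.choose (0 + 1) 2 = 0 from rfl,
            pow_zero, mul_one, (ih N).2 hN]
          simp [show ¬(N = 0) from by omega]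
      rw [Finset.sum_congr rfl hterm, Finset.sum_add_distrib]
      rw [Finset.sum_ite_eq' (Finset.range (N + 1)) 0 (fun _ => (1 : ℤ)),
        Finset.sum_ite_eq' (Finset.range (N + 1)) N (fun _ => (j + 1 : ℤ))]
      simp
      ring


theorem angle_degree_leadingCoeff (n k : ℕ) (hkn : k < n) :
    (angle n k).natDegree = Nat.choose (n - k + 1) 2 ∧
      (angle n k).leadingCoeff = (k + 1 : ℤ) := by
  have hN : 1 ≤ n - k := by omega
  obtain ⟨h1, h2⟩ := key k (n - k)
  have h2 := h2 hN
  have hne : (angle n k).coeff (Nat.choose (n - k + 1) 2) ≠ 0 := by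
    rw [angle, h2]; positivity
  have hdeg : (angle n k).natDegree = Nat.choose (n - k + 1) 2 :=
    le_antisymm h1 (Polynomial.le_natDegree_of_ne_zero hne)
  refine ⟨hdeg, ?_⟩
  rw [Polynomial.leadingCoeff, hdeg, angle, h2]
end

section
/- For 0 ≤ k ≤ n, the coefficient ⟨n, k⟩_q of x^{n-k} in f(x)^{k+1} equals ∑_{λ ∈ P_{n+1,k+1}} w(λ), where for a partition λ = (λ_1, ..., λ_ℓ) the weight is w(λ) = (∏_{i=1}^{ℓ-1} C(λ_i, λ_{i+1})) · q^{∑_{i=1}^{ℓ} (i-1)λ_i}, and P_{n+1,k+1} is the set of partitions of n+1 with largest part k+1. -/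
/-- The decreasing list of parts of a partition. -/
def plist {n : ℕ} (p : n.Partition) : List ℕ := p.parts.sort (· ≥ ·)

/-- `coef(λ) = ∏ C(λ_i, λ_{i+1})`. -/
def coefw (l : List ℕ) : ℕ :=
  ∏ i ∈ Finset.range (l.length - 1), (l.getD i 0).choose (l.getD (i + 1) 0)

/-- `ex(λ) = ∑ (i-1) λ_i`. -/
def exw (l : List ℕ) : ℕ := ∑ i ∈ Finset.range l.length, i * l.getD i 0

/-- The weight `w(λ) = coef(λ) q^{ex(λ)}`. -/
noncomputable def w (l : List ℕ) : Polynomial ℤ :=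
  (coefw l : Polynomial ℤ) * Polynomial.X ^ exw l

open PowerSeries Polynomial in
lemma f_eq : f = 1 + PowerSeries.C (R := Polynomial ℤ) Polynomial.X *
    (PowerSeries.X * PowerSeries.rescale Polynomial.X f) := by
  ext m
  cases m with
  | zero => simp [f, PowerSeries.coeff_zero_eq_constantCoeff]
  | succ m =>
    rw [map_add, PowerSeries.coeff_C_mul, PowerSeries.coeff_succ_X_mul,
      PowerSeries.coeff_rescale]
    simp only [f, PowerSeries.coeff_mk, PowerSeries.coeff_one, Nat.succ_ne_zero, if_false,
      zero_add, ← pow_succ', ← pow_add]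
    congr 1
    rw [Nat.choose_succ_succ (m+1) 1, Nat.choose_one_right]
    ring

open PowerSeries Polynomial in
lemma L1 (m K : ℕ) (hm : 1 ≤ m) :
    PowerSeries.coeff (R := Polynomial ℤ) m (f ^ K) =
    ∑ j ∈ Finset.range (K + 1), if j ≤ m then
      (Nat.choose K j : Polynomial ℤ) * Polynomial.X ^ m *
        PowerSeries.coeff (R := Polynomial ℤ) (m - j) (f ^ j) else 0 := by
  conv_lhs => rw [f_eq, add_comm, add_pow]
  rw [map_sum]
  refine Finset.sum_congr rfl fun j hj => ?_
  have h1 : (PowerSeries.C (R := Polynomial ℤ) Polynomial.X *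
      (PowerSeries.X * PowerSeries.rescale Polynomial.X f)) ^ j =
      PowerSeries.C (R := Polynomial ℤ) (Polynomial.X ^ j) *
        (PowerSeries.X ^ j * PowerSeries.rescale Polynomial.X (f ^ j)) := by
    rw [mul_pow, mul_pow, map_pow, map_pow]
  rw [h1, one_pow, mul_one]
  have h2 : ((K.choose j : ℕ) : PowerSeries (Polynomial ℤ)) =
      PowerSeries.C (R := Polynomial ℤ) ((K.choose j : ℕ) : Polynomial ℤ) := by
    simp
  rw [h2, PowerSeries.coeff_mul_C, PowerSeries.coeff_C_mul, PowerSeries.coeff_X_pow_mul']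
  split_ifs with h
  · rw [PowerSeries.coeff_rescale, ← mul_assoc, ← pow_add, Nat.add_sub_cancel' h]
    ring
  · simp


lemma sum_getD (l : List ℕ) : ∑ i ∈ Finset.range l.length, l.getD i 0 = l.sum := by
  induction l with
  | nil => simp
  | cons a l ih =>
    rw [List.length_cons, Finset.sum_range_succ', List.sum_cons]
    simp only [List.getD_cons_succ, List.getD_cons_zero, ih]
    ring

lemma coefw_cons (a : ℕ) (l : List ℕ) :
    coefw (a :: l) = a.choose (l.headD 0) * coefw l := by
  cases l with
  | nil => simp [coefw]
  | cons b l =>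
    unfold coefw
    rw [List.length_cons, List.length_cons, Nat.add_sub_cancel, Nat.add_sub_cancel,
      Finset.prod_range_succ']
    simp only [List.getD_cons_succ, List.getD_cons_zero, List.headD_cons]
    ring

lemma exw_cons (a : ℕ) (l : List ℕ) : exw (a :: l) = l.sum + exw l := by
  unfold exw
  rw [List.length_cons, Finset.sum_range_succ']
  simp only [List.getD_cons_succ, List.getD_cons_zero, add_mul, one_mul, zero_mul, add_zero,
    Finset.sum_add_distrib, sum_getD]
  ring

lemma w_cons (a : ℕ) (l : List ℕ) :
    w (a :: l) = (a.choose (l.headD 0) : Polynomial ℤ) * Polynomial.X ^ l.sum * w l := by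
  unfold w
  rw [coefw_cons, exw_cons, pow_add, Nat.cast_mul]
  ring

lemma plist_sum {n : ℕ} (p : n.Partition) : (plist p).sum = n := by
  have : ((p.parts.sort (· ≥ ·) : List ℕ) : Multiset ℕ) = p.parts := Multiset.sort_eq _ _
  calc (plist p).sum = (((p.parts.sort (· ≥ ·) : List ℕ) : Multiset ℕ)).sum := rfl
    _ = n := by rw [this, p.parts_sum]

lemma mem_plist {n : ℕ} {p : n.Partition} {a : ℕ} : a ∈ plist p ↔ a ∈ p.parts :=
  Multiset.mem_sort _

lemma plist_sorted {n : ℕ} (p : n.Partition) : (plist p).Pairwise (· ≥ ·) :=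
  Multiset.pairwise_sort _ _

lemma le_headD_of_mem {l : List ℕ} (hl : l.Pairwise (· ≥ ·)) {a : ℕ} (ha : a ∈ l) :
    a ≤ l.headD 0 := by
  cases l with
  | nil => simp at ha
  | cons b l =>
    rcases List.mem_cons.1 ha with rfl | h
    · simp
    · exact List.rel_of_pairwise_cons hl h

lemma plist_ne_nil {n : ℕ} (hn : n ≠ 0) (p : n.Partition) : plist p ≠ [] := by
  intro h
  have := plist_sum p
  rw [h] at this
  exact hn this.symm

lemma head?_plist {n : ℕ} (hn : n ≠ 0) (p : n.Partition) :
    (plist p).head? = some ((plist p).headD 0) := by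
  cases h : plist p with
  | nil => exact absurd h (plist_ne_nil hn p)
  | cons a l => simp

lemma headD_mem_plist {n : ℕ} (hn : n ≠ 0) (p : n.Partition) :
    (plist p).headD 0 ∈ plist p := by
  cases h : plist p with
  | nil => exact absurd h (plist_ne_nil hn p)
  | cons a l => simp

noncomputable def S (m j : ℕ) : Polynomial ℤ :=
  ∑ p ∈ Finset.univ.filter (fun p : m.Partition => (plist p).head? = some j), w (plist p)

lemma mem_le_sum {s : Multiset ℕ} {a : ℕ} (h : a ∈ s) : a ≤ s.sum := by
  have := Multiset.cons_erase h
  have h2 : s.sum = a + (s.erase a).sum := by rw [← Multiset.sum_cons, this]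
  omega

lemma head_mem_parts {m j : ℕ} {p : m.Partition} (h : (plist p).head? = some j) :
    j ∈ p.parts := by
  have : j ∈ plist p := List.mem_of_mem_head? (by rw [h]; rfl)
  exact mem_plist.1 this

lemma S_eq_zero {m j : ℕ} (h : j = 0 ∨ m < j) : S m j = 0 := by
  apply Finset.sum_eq_zero
  intro p hp
  rw [Finset.mem_filter] at hp
  have hj := head_mem_parts hp.2
  have h1 : 0 < j := p.parts_pos hj
  have h2 : j ≤ m := by have := mem_le_sum hj; rwa [p.parts_sum] at this
  omega

lemma S_base (k : ℕ) : S (k + 1) (k + 1) = 1 := by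
  have hset : (Finset.univ.filter
      (fun p : (k+1).Partition => (plist p).head? = some (k+1))) =
      {Nat.Partition.indiscrete (k+1)} := by
    ext p
    simp only [Finset.mem_filter, Finset.mem_univ, true_and, Finset.mem_singleton]
    constructor
    · intro h
      have hj := head_mem_parts h
      have hsum : p.parts.sum = k + 1 := p.parts_sum
      have hce := Multiset.cons_erase hj
      have h2 : p.parts.sum = (k+1) + (p.parts.erase (k+1)).sum := by
        rw [← Multiset.sum_cons, hce]
      have h3 : (p.parts.erase (k+1)).sum = 0 := by omega
      have h4 : p.parts.erase (k+1) = 0 := by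
        by_contra hne
        obtain ⟨a, ha⟩ := Multiset.exists_mem_of_ne_zero hne
        have := p.parts_pos (Multiset.mem_of_mem_erase ha)
        have := mem_le_sum ha
        omega
      ext1
      rw [Nat.Partition.indiscrete_parts (Nat.succ_ne_zero k), ← hce, h4]
      rfl
    · rintro rfl
      show (Multiset.sort _ _).head? = _
      rw [Nat.Partition.indiscrete_parts (Nat.succ_ne_zero k), Multiset.sort_singleton]
      rfl
  rw [S, hset, Finset.sum_singleton]
  show w (Multiset.sort _ _) = 1
  rw [Nat.Partition.indiscrete_parts (Nat.succ_ne_zero k), Multiset.sort_singleton]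
  simp [w, coefw, exw]

def consTop (k m : ℕ) (p' : m.Partition) : (m + (k+1)).Partition :=
  ⟨(k+1) ::ₘ p'.parts,
   by intro i hi
      rcases Multiset.mem_cons.1 hi with rfl | h
      · omega
      · exact p'.parts_pos h,
   by rw [Multiset.sum_cons, p'.parts_sum]; omega⟩

lemma erase_le {k m : ℕ} {p : (m + (k+1)).Partition}
    (hp : (plist p).head? = some (k+1)) :
    ∀ b ∈ p.parts.erase (k+1), k + 1 ≥ b := by
  intro b hb
  have hbp : b ∈ plist p := mem_plist.2 (Multiset.mem_of_mem_erase hb)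
  have h1 : b ≤ (plist p).headD 0 := le_headD_of_mem (plist_sorted p) hbp
  have h2 : (plist p).headD 0 = k + 1 := by
    cases hl : plist p with
    | nil => rw [hl] at hp; simp at hp
    | cons a l =>
      rw [hl] at hp
      simpa using hp
  omega

lemma plist_decomp {k m : ℕ} {p : (m + (k+1)).Partition}
    (hp : (plist p).head? = some (k+1)) :
    plist p = (k+1) :: (p.parts.erase (k+1)).sort (· ≥ ·) := by
  have hmem : (k+1) ∈ p.parts := head_mem_parts hp
  calc plist p = Multiset.sort ((k+1) ::ₘ p.parts.erase (k+1)) (· ≥ ·) := by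
        rw [Multiset.cons_erase hmem]; rfl
    _ = (k+1) :: (p.parts.erase (k+1)).sort (· ≥ ·) :=
        Multiset.sort_cons _ _ _ (erase_le hp)

lemma L2a (m k : ℕ) :
    S (m + (k+1)) (k+1) =
    ∑ p' ∈ Finset.univ.filter (fun p' : m.Partition => ∀ a ∈ p'.parts, a ≤ k+1),
      ((k+1).choose ((plist p').headD 0) : Polynomial ℤ) * Polynomial.X ^ m * w (plist p') := by
  refine Finset.sum_bij'
    (i := fun p hp => (⟨p.parts.erase (k+1),
        fun hi => p.parts_pos (Multiset.mem_of_mem_erase hi), ?_⟩ : m.Partition))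
    (j := fun p' _ => consTop k m p') ?_ ?_ ?_ ?_ ?_
  case refine_1 =>
    rw [Finset.mem_filter] at hp
    have hmem : (k+1) ∈ p.parts := head_mem_parts hp.2
    have h2 : p.parts.sum = (k+1) + (p.parts.erase (k+1)).sum := by
      rw [← Multiset.sum_cons, Multiset.cons_erase hmem]
    have h3 := p.parts_sum
    omega
  case refine_2 =>
    intro p hp
    rw [Finset.mem_filter] at hp ⊢
    refine ⟨Finset.mem_univ _, fun a ha => ?_⟩
    exact erase_le hp.2 a ha
  case refine_3 =>
    intro p' hp'
    rw [Finset.mem_filter] at hp' ⊢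
    refine ⟨Finset.mem_univ _, ?_⟩
    show (Multiset.sort ((k+1) ::ₘ p'.parts) (· ≥ ·)).head? = _
    rw [Multiset.sort_cons _ _ _ (fun b hb => hp'.2 b hb)]
    rfl
  case refine_4 =>
    intro p hp
    rw [Finset.mem_filter] at hp
    ext1
    exact Multiset.cons_erase (head_mem_parts hp.2)
  case refine_5 =>
    intro p' hp'
    ext1
    exact Multiset.erase_cons_head _ _
  case refine_6 =>
    intro p hp
    rw [Finset.mem_filter] at hp
    have hd := plist_decomp hp.2
    rw [show w (plist p) = _ from congrArg w hd, w_cons]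
    have hsum : ((p.parts.erase (k+1)).sort (· ≥ ·) : List ℕ).sum = m := by
      have := plist_sum (n := m) ⟨p.parts.erase (k+1),
        fun hi => p.parts_pos (Multiset.mem_of_mem_erase hi), by
          have h2 : p.parts.sum = (k+1) + (p.parts.erase (k+1)).sum := by
            rw [← Multiset.sum_cons, Multiset.cons_erase (head_mem_parts hp.2)]
          have h3 := p.parts_sum
          omega⟩
      exact this
    rw [hsum]
    rfl

lemma headD_eq_of_head? {m j : ℕ} (hm : m ≠ 0) {p : m.Partition}
    (h : (plist p).head? = some j) : (plist p).headD 0 = j := by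
  have := head?_plist hm p
  rw [h] at this
  exact (Option.some_injective _ this.symm)

lemma L2 (m k : ℕ) (hm : m ≠ 0) :
    S (m + (k+1)) (k+1) =
    ∑ j ∈ Finset.range (k+2),
      ((k+1).choose j : Polynomial ℤ) * Polynomial.X ^ m * S m j := by
  rw [L2a]
  rw [← Finset.sum_fiberwise_of_maps_to
    (g := fun p' : m.Partition => (plist p').headD 0) (t := Finset.range (k+2))
    (fun p hp => by
      rw [Finset.mem_filter] at hp
      rw [Finset.mem_range]
      have h1 := le_headD_of_mem (plist_sorted p) (headD_mem_plist hm p)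
      have h2 : (plist p).headD 0 ≤ k + 1 :=
        hp.2 _ (mem_plist.1 (headD_mem_plist hm p))
      show (plist p).headD 0 < k + 2
      omega)]
  refine Finset.sum_congr rfl fun j hj => ?_
  rw [Finset.mem_range] at hj
  have hset : ((Finset.univ.filter
        (fun p' : m.Partition => ∀ a ∈ p'.parts, a ≤ k+1)).filter
        (fun p' => (plist p').headD 0 = j)) =
      Finset.univ.filter (fun p' : m.Partition => (plist p').head? = some j) := by
    ext p
    simp only [Finset.mem_filter, Finset.mem_univ, true_and]
    constructor
    · rintro ⟨h1, h2⟩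
      rw [head?_plist hm p, h2]
    · intro h
      have hd := headD_eq_of_head? hm h
      refine ⟨fun a ha => ?_, hd⟩
      have := le_headD_of_mem (plist_sorted p) (mem_plist.2 ha)
      omega
  rw [hset, S, Finset.mul_sum]
  refine Finset.sum_congr rfl fun p hp => ?_
  rw [Finset.mem_filter] at hp
  rw [headD_eq_of_head? hm hp.2]


lemma main_aux (n : ℕ) : ∀ k, k ≤ n → angle n k = S (n + 1) (k + 1) := by
  induction n using Nat.strong_induction_on with
  | _ n IH =>
    intro k hk
    obtain ⟨m, rfl⟩ : ∃ m, n = m + k := ⟨n - k, by omega⟩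
    rcases Nat.eq_zero_or_pos m with rfl | hm
    · simp only [Nat.zero_add]
      rw [S_base]
      unfold angle
      rw [Nat.sub_self, PowerSeries.coeff_zero_eq_constantCoeff, map_pow]
      have hc : PowerSeries.constantCoeff (R := Polynomial ℤ) f = 1 := by
        rw [← PowerSeries.coeff_zero_eq_constantCoeff]
        simp [f]
      rw [hc, one_pow]
    · unfold angle
      rw [show m + k - k = m from by omega, L1 m (k + 1) hm]
      rw [show S (m + k + 1) (k + 1) = S (m + (k + 1)) (k + 1) from rfl,
        L2 m k (by omega)]
      refine Finset.sum_congr rfl fun j hj => ?_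
      by_cases hjm : j ≤ m
      · rw [if_pos hjm]
        rcases Nat.eq_zero_or_pos j with rfl | hj1
        · rw [S_eq_zero (Or.inl rfl), pow_zero]
          have : (PowerSeries.coeff (R := Polynomial ℤ) (m - 0)) 1 = 0 := by
            rw [PowerSeries.coeff_one, if_neg (by omega)]
          rw [this]
        · obtain ⟨j', rfl⟩ : ∃ j', j = j' + 1 := ⟨j - 1, by omega⟩
          obtain ⟨m', rfl⟩ : ∃ m', m = m' + 1 := ⟨m - 1, by omega⟩
          have hIH := IH m' (by omega) j' (by omega)
          unfold angle at hIH
          rw [show m' + 1 - (j' + 1) = m' - j' from by omega, hIH]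
      · rw [if_neg hjm, S_eq_zero (Or.inr (by omega))]
        ring

theorem angle_eq_sum_weights (n k : ℕ) (hkn : k ≤ n) :
    angle n k =
      ∑ p ∈ Finset.univ.filter
        (fun p : (n + 1).Partition => (plist p).head? = some (k + 1)),
        w (plist p) :=
  main_aux n k hkn
end
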